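/- Asymptotic uniformity decomposition: let a = h(x,x⁺) and let b₁, b₂, ... be i.i.d. samples of h(x, X⁻) with X⁻ ∼ p, where h is bounded. Then (log(e^a + ∑_{i=1}^M e^{bᵢ}) - log M) converges almost surely as M → ∞ to log 𝔼_{X⁻∼p}[e^{h(x,X⁻)}]. Hence the normalized InfoNCE loss converges to the alignment term plus the uniformity term log 𝔼 e^{h}. -/

import Mathlib

open MeasureTheory Filter ProbabilityTheory

set_option maxHeartbeats 1000000 in
theorem asymptotic_uniformity_decomposition
    {X : Type*} [MeasurableSpace X] (p : Measure X) [IsProbabilityMeasure p]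
    (h : X → X → ℝ) (hmeas : Measurable (Function.uncurry h))
    (hbdd : ∃ C : ℝ, ∀ x y, |h x y| ≤ C)
    (x xpos : X)
    {Ω : Type*} [MeasurableSpace Ω] (μ : Measure Ω) [IsProbabilityMeasure μ]
    (Xneg : ℕ → Ω → X) (hXmeas : ∀ i, Measurable (Xneg i))
    (hindep : iIndepFun Xneg μ)
    (hdist : ∀ i, μ.map (Xneg i) = p) :
    ∀ᵐ ω ∂μ, Tendsto
      (fun M : ℕ =>
        Real.log (Real.exp (h x xpos)
            + ∑ i ∈ Finset.range M, Real.exp (h x (Xneg i ω)))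
          - Real.log M)
      atTop (nhds (Real.log (∫ y, Real.exp (h x y) ∂p))) := by
  obtain ⟨C, hC⟩ := hbdd
  have hx : Measurable (h x) := hmeas.comp measurable_prodMk_left
  set Y : ℕ → Ω → ℝ := fun i ω => Real.exp (h x (Xneg i ω)) with hY
  have hexp : Measurable fun y => Real.exp (h x y) := Real.measurable_exp.comp hx
  have hYmeas : ∀ i, Measurable (Y i) := fun i => hexp.comp (hXmeas i)
  have hYint : Integrable (Y 0) μ :=
    (integrable_const (Real.exp C)).mono' (hYmeas 0).aestronglyMeasurable
      (ae_of_all _ fun ω => by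
        rw [Real.norm_eq_abs, abs_of_pos (Real.exp_pos _)]
        exact Real.exp_le_exp.2 ((abs_le.1 (hC x _)).2))
  have hpint : Integrable (fun y => Real.exp (h x y)) p :=
    (integrable_const (Real.exp C)).mono' hexp.aestronglyMeasurable
      (ae_of_all _ fun y => by
        rw [Real.norm_eq_abs, abs_of_pos (Real.exp_pos _)]
        exact Real.exp_le_exp.2 ((abs_le.1 (hC x y)).2))
  have hE : μ[Y 0] = ∫ y, Real.exp (h x y) ∂p := by
    rw [← hdist 0, integral_map (hXmeas 0).aemeasurable hexp.aestronglyMeasurable]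
  have hEpos : 0 < ∫ y, Real.exp (h x y) ∂p := by
    have hle : Real.exp (-C) ≤ ∫ y, Real.exp (h x y) ∂p := by
      calc Real.exp (-C) = ∫ _, Real.exp (-C) ∂p := by simp
        _ ≤ ∫ y, Real.exp (h x y) ∂p :=
          integral_mono (integrable_const _) hpint fun y =>
            Real.exp_le_exp.2 (abs_le.1 (hC x y)).1
    linarith [Real.exp_pos (-C)]
  have hpair : Pairwise (Function.onFun (IndepFun · · μ) Y) := fun i j hij =>
    (hindep.indepFun hij).comp hexp hexp
  have hident : ∀ i, IdentDistrib (Y i) (Y 0) μ μ := by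
    intro i
    have hid : IdentDistrib (Xneg i) (Xneg 0) μ μ :=
      ⟨(hXmeas i).aemeasurable, (hXmeas 0).aemeasurable, by rw [hdist i, hdist 0]⟩
    exact hid.comp hexp
  have hslln := strong_law_ae_real Y hYint hpair hident
  filter_upwards [hslln] with ω hω
  rw [hE] at hω
  have hsum : Tendsto
      (fun M : ℕ => Real.exp (h x xpos) / M + (∑ i ∈ Finset.range M, Y i ω) / M)
      atTop (nhds (0 + ∫ y, Real.exp (h x y) ∂p)) :=
    (tendsto_const_nhds.div_atTop tendsto_natCast_atTop_atTop).add hω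
  rw [zero_add] at hsum
  have hlog := (Real.continuousAt_log (ne_of_gt hEpos)).tendsto.comp hsum
  apply hlog.congr'
  filter_upwards [eventually_ge_atTop 1] with M hM
  have hMpos : (0:ℝ) < M := by exact_mod_cast hM
  have hpos : 0 < Real.exp (h x xpos) + ∑ i ∈ Finset.range M, Real.exp (h x (Xneg i ω)) :=
    add_pos_of_pos_of_nonneg (Real.exp_pos _)
      (Finset.sum_nonneg fun i _ => (Real.exp_pos _).le)
  show Real.log (Real.exp (h x xpos) / M + (∑ i ∈ Finset.range M, Y i ω) / M) = _
  rw [← add_div, Real.log_div hpos.ne' hMpos.ne']
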